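/- For a₁, a₂, a₃ > 0, set p(x) = (1+a₁x²)(1+a₂x²)(1+a₃x²) − 1, P(x) = p(x)/x², and φ_k = a_k ∫_{−∞}^{∞} dx / ((1+a_k x²)√P(x)) for k = 1,2,3. Then each φ_k lies in (0,π) and φ₁ + φ₂ + φ₃ = π. -/

import Mathlib

/-!
STATEMENT 2: For a₁, a₂, a₃ > 0, set p(x) = (1+a₁x²)(1+a₂x²)(1+a₃x²) − 1,
P(x) = p(x)/x², and φ_k = a_k ∫_{−∞}^{∞} dx / ((1+a_k x²)√P(x)) for k = 1,2,3.
Then each φ_k lies in (0,π) and φ₁ + φ₂ + φ₃ = π.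
-/

open MeasureTheory

open Set Filter Real in
theorem lawlor_angles (a : Fin 3 → ℝ) (ha : ∀ k, 0 < a k) :
    let p : ℝ → ℝ := fun x => (1 + a 0 * x ^ 2) * (1 + a 1 * x ^ 2) * (1 + a 2 * x ^ 2) - 1
    let P : ℝ → ℝ := fun x => p x / x ^ 2
    let φ : Fin 3 → ℝ := fun k =>
      a k * ∫ x : ℝ, 1 / ((1 + a k * x ^ 2) * Real.sqrt (P x))
    (∀ k, φ k ∈ Set.Ioo 0 Real.pi) ∧ φ 0 + φ 1 + φ 2 = Real.pi := by
  intro p P φ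
  have hp : p = fun x => (1 + a 0 * x ^ 2) * (1 + a 1 * x ^ 2) * (1 + a 2 * x ^ 2) - 1 := rfl
  have hP : P = fun x => p x / x ^ 2 := rfl
  have hφdef : φ = fun k => a k * ∫ x : ℝ, 1 / ((1 + a k * x ^ 2) * Real.sqrt (P x)) := rfl
  clear_value p P φ
  obtain ⟨G, hGdef⟩ : ∃ G : Fin 3 → ℝ → ℝ,
      G = fun k x => 2 * a k * x / ((1 + a k * x ^ 2) * Real.sqrt (p x)) := ⟨_, rfl⟩
  -- basic facts about p
  have hpnn : ∀ x, 0 ≤ p x := by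
    intro x
    have h0 : 0 ≤ a 0 * x ^ 2 := mul_nonneg (ha 0).le (sq_nonneg x)
    have h1 : 0 ≤ a 1 * x ^ 2 := mul_nonneg (ha 1).le (sq_nonneg x)
    have h2 : 0 ≤ a 2 * x ^ 2 := mul_nonneg (ha 2).le (sq_nonneg x)
    simp only [hp]
    nlinarith [mul_nonneg h0 h1, mul_nonneg h1 h2, mul_nonneg h0 h2,
      mul_nonneg (mul_nonneg h0 h1) h2]
  have hppos : ∀ x : ℝ, 0 < x → 0 < p x := by
    intro x hx
    have h0 : 0 < a 0 * x ^ 2 := mul_pos (ha 0) (by positivity)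
    have h1 : 0 ≤ a 1 * x ^ 2 := mul_nonneg (ha 1).le (sq_nonneg x)
    have h2 : 0 ≤ a 2 * x ^ 2 := mul_nonneg (ha 2).le (sq_nonneg x)
    simp only [hp]
    nlinarith [mul_nonneg h1 h2, mul_nonneg h0.le h1, mul_nonneg h0.le h2,
      mul_nonneg (mul_nonneg h0.le h1) h2]
  have hpcont : Continuous p := by rw [hp]; continuity
  -- derivative of F = 2 arctan √p
  have hderiv : ∀ x ∈ Ioi (0:ℝ), HasDerivAt (fun y => 2 * Real.arctan (Real.sqrt (p y)))
      (G 0 x + G 1 x + G 2 x) x := by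
    intro x hx
    have hx : (0:ℝ) < x := hx
    have hpx : 0 < p x := hppos x hx
    have e0 : HasDerivAt (fun y : ℝ => 1 + a 0 * y ^ 2) (a 0 * (2 * x)) x := by
      simpa using ((hasDerivAt_pow 2 x).const_mul (a 0)).const_add 1
    have e1 : HasDerivAt (fun y : ℝ => 1 + a 1 * y ^ 2) (a 1 * (2 * x)) x := by
      simpa using ((hasDerivAt_pow 2 x).const_mul (a 1)).const_add 1
    have e2 : HasDerivAt (fun y : ℝ => 1 + a 2 * y ^ 2) (a 2 * (2 * x)) x := by
      simpa using ((hasDerivAt_pow 2 x).const_mul (a 2)).const_add 1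
    have hp' : HasDerivAt p
        ((a 0 * (2 * x) * (1 + a 1 * x ^ 2) + (1 + a 0 * x ^ 2) * (a 1 * (2 * x)))
          * (1 + a 2 * x ^ 2)
          + (1 + a 0 * x ^ 2) * (1 + a 1 * x ^ 2) * (a 2 * (2 * x))) x := by
      rw [hp]
      exact ((e0.mul e1).mul e2).sub_const 1
    have harc := HasDerivAt.const_mul 2 (HasDerivAt.arctan (hp'.sqrt hpx.ne'))
    refine harc.congr_deriv ?_
    have hsq : Real.sqrt (p x) ^ 2 = p x := Real.sq_sqrt (hpnn x)
    have hs : 0 < Real.sqrt (p x) := Real.sqrt_pos.2 hpx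
    rw [hGdef, hsq]
    have d0 : (0:ℝ) < 1 + a 0 * x ^ 2 := by nlinarith [sq_nonneg x, ha 0]
    have d1 : (0:ℝ) < 1 + a 1 * x ^ 2 := by nlinarith [sq_nonneg x, ha 1]
    have d2 : (0:ℝ) < 1 + a 2 * x ^ 2 := by nlinarith [sq_nonneg x, ha 2]
    have hpx1 : (0:ℝ) < 1 + p x := by linarith
    have hpeq : 1 + p x = (1 + a 0 * x ^ 2) * (1 + a 1 * x ^ 2) * (1 + a 2 * x ^ 2) := by
      rw [hp]; ring
    simp only []
    rw [hpeq]
    rw [div_add_div _ _ (by positivity) (by positivity), div_add_div _ _ (by positivity) (by positivity),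
      one_div, mul_div_assoc', inv_mul_eq_div, div_div, mul_div_assoc', div_eq_div_iff (by positivity) (by positivity)]
    ring
  -- limit at infinity and value at 0
  have hc : (0:ℝ) < a 0 * a 1 * a 2 := mul_pos (mul_pos (ha 0) (ha 1)) (ha 2)
  have hsqrtTop : Tendsto (fun y : ℝ => Real.sqrt (p y)) atTop atTop := by
    apply tendsto_atTop_mono (f := fun y : ℝ => Real.sqrt (a 0 * a 1 * a 2) * y ^ 3)
    · intro y
      rcases le_or_gt y 0 with hy | hy
      · have : Real.sqrt (a 0 * a 1 * a 2) * y ^ 3 ≤ 0 := by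
          apply mul_nonpos_of_nonneg_of_nonpos (Real.sqrt_nonneg _)
          exact Odd.pow_nonpos ⟨1, by norm_num⟩ hy
        exact this.trans (Real.sqrt_nonneg _)
      · have h1 : a 0 * a 1 * a 2 * y ^ 6 ≤ p y := by
          simp only [hp]
          have h0 : 0 < a 0 * y ^ 2 := mul_pos (ha 0) (by positivity)
          have h1 : 0 < a 1 * y ^ 2 := mul_pos (ha 1) (by positivity)
          have h2 : 0 < a 2 * y ^ 2 := mul_pos (ha 2) (by positivity)
          nlinarith [mul_pos h0 h1, mul_pos h1 h2, mul_pos h0 h2,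
            mul_pos (mul_pos h0 h1) h2]
        calc Real.sqrt (a 0 * a 1 * a 2) * y ^ 3
            = Real.sqrt (a 0 * a 1 * a 2 * y ^ 6) := by
              rw [Real.sqrt_mul hc.le, show y ^ 6 = (y ^ 3) ^ 2 by ring,
                Real.sqrt_sq (by positivity)]
          _ ≤ Real.sqrt (p y) := Real.sqrt_le_sqrt h1
    · exact (tendsto_pow_atTop (by norm_num)).const_mul_atTop (Real.sqrt_pos.2 hc)
  have hFtop : Tendsto (fun y => 2 * Real.arctan (Real.sqrt (p y))) atTop (nhds Real.pi) := by
    have harct : Tendsto (fun y : ℝ => Real.arctan (Real.sqrt (p y))) atTop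
        (nhds (Real.pi / 2)) :=
      (tendsto_nhds_of_tendsto_nhdsWithin Real.tendsto_arctan_atTop).comp hsqrtTop
    simpa [mul_div_cancel₀] using harct.const_mul 2
  have hFcont : ContinuousWithinAt (fun y => 2 * Real.arctan (Real.sqrt (p y))) (Ici 0) 0 := by
    apply Continuous.continuousWithinAt
    exact continuous_const.mul (Real.continuous_arctan.comp (Real.continuous_sqrt.comp hpcont))
  have hF0 : (2 : ℝ) * Real.arctan (Real.sqrt (p 0)) = 0 := by
    have : p 0 = 0 := by simp only [hp]; norm_num
    simp [this]
  -- nonnegativity of G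
  have hGnonneg : ∀ k, ∀ x ∈ Ioi (0:ℝ), 0 ≤ G k x := by
    intro k x hx
    have hx : (0:ℝ) < x := hx
    rw [hGdef]
    have d : (0:ℝ) < 1 + a k * x ^ 2 := by nlinarith [sq_nonneg x, ha k]
    exact div_nonneg (by have := (ha k).le; positivity)
      (mul_nonneg d.le (Real.sqrt_nonneg _))
  have hgnonneg : ∀ x ∈ Ioi (0:ℝ), 0 ≤ G 0 x + G 1 x + G 2 x := by
    intro x hx
    have h0 := hGnonneg 0 x hx; have h1 := hGnonneg 1 x hx; have h2 := hGnonneg 2 x hx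
    linarith
  -- integrability of the sum and the total integral
  have hint_g : IntegrableOn (fun x => G 0 x + G 1 x + G 2 x) (Ioi (0:ℝ)) :=
    integrableOn_Ioi_deriv_of_nonneg hFcont hderiv hgnonneg hFtop
  have hint_sum : ∫ x in Ioi (0:ℝ), (G 0 x + G 1 x + G 2 x) = Real.pi := by
    rw [integral_Ioi_of_hasDerivAt_of_nonneg hFcont hderiv hgnonneg hFtop, hF0, sub_zero]
  -- integrability of each term
  have hGcont : ∀ k, ContinuousOn (G k) (Ioi (0:ℝ)) := by
    intro k
    rw [hGdef]
    apply ContinuousOn.div (by fun_prop)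
    · exact (Continuous.mul (by fun_prop) (Real.continuous_sqrt.comp hpcont)).continuousOn
    · intro x hx
      have hx : (0:ℝ) < x := hx
      have d : (0:ℝ) < 1 + a k * x ^ 2 := by nlinarith [sq_nonneg x, ha k]
      have hs : 0 < Real.sqrt (p x) := Real.sqrt_pos.2 (hppos x hx)
      exact (mul_pos d hs).ne'
  have hint : ∀ k, IntegrableOn (G k) (Ioi (0:ℝ)) := by
    intro k
    apply Integrable.mono hint_g ((hGcont k).aestronglyMeasurable measurableSet_Ioi)
    filter_upwards [ae_restrict_mem measurableSet_Ioi] with x hx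
    have h0 := hGnonneg 0 x hx
    have h1 := hGnonneg 1 x hx
    have h2 := hGnonneg 2 x hx
    have hk := hGnonneg k x hx
    rw [Real.norm_eq_abs, Real.norm_eq_abs, abs_of_nonneg hk, abs_of_nonneg (by linarith)]
    fin_cases k
    · simpa using by linarith
    · simpa using by linarith
    · simpa using by linarith
  -- each φ k equals the integral of G k over (0, ∞)
  have hφeq : ∀ k, φ k = ∫ x in Ioi (0:ℝ), G k x := by
    intro k
    simp only [hφdef, hP]
    have hpe : ∀ x : ℝ, p (-x) = p x := by intro x; simp [hp]
    have e1 : (∫ x : ℝ, 1 / ((1 + a k * x ^ 2) * Real.sqrt (p x / x ^ 2)))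
        = ∫ x : ℝ, (fun t => 1 / ((1 + a k * t ^ 2) * Real.sqrt (p t / t ^ 2))) |x| := by
      congr 1; funext x
      rcases abs_choice x with h | h
      · rw [h]
      · rw [h]; simp [hpe, neg_pow]
    rw [e1, integral_comp_abs
      (f := fun t => 1 / ((1 + a k * t ^ 2) * Real.sqrt (p t / t ^ 2)))]
    rw [show a k * (2 * ∫ x in Ioi (0:ℝ), 1 / ((1 + a k * x ^ 2) * Real.sqrt (p x / x ^ 2)))
        = (2 * a k) * ∫ x in Ioi (0:ℝ), 1 / ((1 + a k * x ^ 2) * Real.sqrt (p x / x ^ 2)) by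
          ring,
      ← integral_const_mul]
    apply setIntegral_congr_fun measurableSet_Ioi
    intro x hx
    have hx : (0:ℝ) < x := hx
    have hsP : Real.sqrt (p x / x ^ 2) = Real.sqrt (p x) / x := by
      rw [Real.sqrt_div (hpnn x), Real.sqrt_sq hx.le]
    have hs : 0 < Real.sqrt (p x) := Real.sqrt_pos.2 (hppos x hx)
    have d : (0:ℝ) < 1 + a k * x ^ 2 := by nlinarith [sq_nonneg x, ha k]
    simp only [hGdef]
    rw [hsP]
    field_simp
  -- positivity of each integral
  have hGpos : ∀ k, ∀ x ∈ Ioo (1:ℝ) 2, 0 < G k x := by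
    intro k x hx
    have hx1 : (0:ℝ) < x := lt_trans one_pos hx.1
    rw [hGdef]
    have d : (0:ℝ) < 1 + a k * x ^ 2 := by nlinarith [sq_nonneg x, ha k]
    have hs : 0 < Real.sqrt (p x) := Real.sqrt_pos.2 (hppos x hx1)
    have : 0 < a k := ha k
    positivity
  have hpos : ∀ k, 0 < ∫ x in Ioi (0:ℝ), G k x := by
    intro k
    have hsub : Ioc (1:ℝ) 2 ⊆ Ioi 0 := fun x hx => lt_trans one_pos hx.1
    have hIoc : 0 < ∫ x in Ioc (1:ℝ) 2, G k x := by
      rw [← intervalIntegral.integral_of_le (by norm_num : (1:ℝ) ≤ 2)]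
      apply intervalIntegral.intervalIntegral_pos_of_pos_on
      · rw [intervalIntegrable_iff_integrableOn_Ioc_of_le (by norm_num : (1:ℝ) ≤ 2)]
        exact (hint k).mono_set hsub
      · exact fun x hx => hGpos k x hx
      · norm_num
    calc (0:ℝ) < ∫ x in Ioc (1:ℝ) 2, G k x := hIoc
      _ ≤ ∫ x in Ioi (0:ℝ), G k x := by
          apply setIntegral_mono_set (hint k)
          · filter_upwards [ae_restrict_mem measurableSet_Ioi] with x hx using hGnonneg k x hx
          · exact HasSubset.Subset.eventuallyLE hsub
  have hφpos : ∀ k, 0 < φ k := fun k => (hφeq k) ▸ hpos k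
  have hsum : φ 0 + φ 1 + φ 2 = Real.pi := by
    have h01 : IntegrableOn (fun x => G 0 x + G 1 x) (Ioi (0:ℝ)) volume :=
      (hint 0).add (hint 1)
    rw [hφeq 0, hφeq 1, hφeq 2, ← integral_add (hint 0) (hint 1),
      ← integral_add h01 (hint 2)]
    exact hint_sum
  refine ⟨fun k => ⟨hφpos k, ?_⟩, hsum⟩
  fin_cases k
  · simpa using by linarith [hφpos 1, hφpos 2]
  · simpa using by linarith [hφpos 0, hφpos 2]
  · simpa using by linarith [hφpos 0, hφpos 1]
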